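/- arXiv:1911.05457 — 2 statements merged into one kernel-verified Lean document; each statement's English description precedes it below -/
import Mathlib

section
/- For every prime p there are, up to isomorphism, exactly p indecomposable cycle sets of cardinality p^2 with cyclic permutation group: one of multipermutational level 1 (namely i·j = j+1 on Z/p^2Z) and p−1 of level 2, given by i·j = j+1+p f(i mod p) on Z/p^2Z where f : Z/pZ → {0,…,p−1} is a bijection with f(0)=0 satisfying f(i+1)+f(j) ≡ f(i)+f(j+1) (mod p). -/
/-- A cycle set: a set with bijective left multiplications `σ x`
satisfying `(x·y)·(x·z) = (y·x)·(y·z)`. -/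
structure CycleSet (X : Type*) where
  σ : X → Equiv.Perm X
  cycl : ∀ x y z : X, σ (σ x y) (σ x z) = σ (σ y x) (σ y z)

namespace CycleSet

variable {X Y : Type*}

/-- The permutation group generated by the left multiplications. -/
def permGroup (S : CycleSet X) : Subgroup (Equiv.Perm X) :=
  Subgroup.closure (Set.range S.σ)

/-- Indecomposability: the permutation group acts transitively. -/
def Transitive (S : CycleSet X) : Prop :=
  ∀ x y : X, ∃ g ∈ S.permGroup, g x = y

/-- The permutation group is abelian. -/
def AbelianPerm (S : CycleSet X) : Prop :=
  ∀ g ∈ S.permGroup, ∀ h ∈ S.permGroup, g * h = h * g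

/-- `rel S n x y` holds iff `x` and `y` become equal in the `n`-th iterated
retraction `σ^n(X)`. -/
def rel (S : CycleSet X) : ℕ → X → X → Prop
  | 0 => Eq
  | n + 1 => fun x y => ∀ z, S.rel n (S.σ x z) (S.σ y z)

/-- The cardinality `|σ^n(X)|` of the `n`-th iterated retraction. -/
noncomputable def retCard (S : CycleSet X) (n : ℕ) : ℕ :=
  Nat.card (Quot (S.rel n))

/-- `X` is multipermutational of level `m`: `m` is minimal with `|σ^m(X)| = 1`. -/
def MultipermLevel (S : CycleSet X) (m : ℕ) : Prop :=
  (∀ x y, S.rel m x y) ∧ ∀ k < m, ¬ (∀ x y, S.rel k x y)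

/-- Isomorphism of cycle sets. -/
def Isomorphic (S : CycleSet X) (T : CycleSet Y) : Prop :=
  ∃ F : X → Y, Function.Bijective F ∧ ∀ x y, F (S.σ x y) = T.σ (F x) (F y)

end CycleSet

/-- `f : Z/pZ -> {0,...,p-1}` is a bijection with `f 0 = 0` satisfying
`f(i+1) + f(j) = f(i) + f(j+1) (mod p)`. -/
def Good (p : ℕ) (f : ZMod p → Fin p) : Prop :=
  Function.Bijective f ∧ (f 0).val = 0 ∧
    ∀ i j : ZMod p,
      ((f (i + 1)).val : ZMod p) + ((f j).val : ZMod p) =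
        ((f i).val : ZMod p) + ((f (j + 1)).val : ZMod p)

/-- The left multiplication `j ↦ j + 1 + p*f(i mod p)` on `Z/p^2Z`. -/
def shiftPerm (p : ℕ) (f : ZMod p → Fin p) (i : ZMod (p ^ 2)) :
    Equiv.Perm (ZMod (p ^ 2)) :=
  Equiv.addRight (1 + (p : ZMod (p ^ 2)) * ((f ((i.val : ZMod p))).val : ZMod (p ^ 2)))



section FE

lemma valcast {n : ℕ} [NeZero n] (a : ZMod n) : ((a.val : ℕ) : ZMod n) = a :=
  ZMod.natCast_rightInverse a

lemma keyPeriod {n : ℕ} [NeZero n] (hn : 1 < n) (s : ZMod n → ZMod n)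
    (hC : ∀ a b, s (b + s a) + s a = s (a + s b) + s b) (h0 : s 0 = 1) :
    ∃ m : ZMod n, m ≠ 0 ∧ ∀ j, s (j + m) = s j := by
  haveI : Fact (1 < n) := ⟨hn⟩
  have hdag : ∀ j, s (j + 1) = s j + s (s j) - 1 := by
    intro j
    have h := hC 0 j
    rw [h0, zero_add] at h
    linear_combination h
  have hni : ¬ Function.Injective s := by
    intro hinj
    obtain ⟨k, hk⟩ := (Finite.injective_iff_bijective.mp hinj).2 0
    have h1 : s (k + 1) = s k := by
      rw [hdag k, hk, h0]; simp
    have h2 := hinj h1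
    have h3 : k + 1 = k + 0 := by rw [add_zero]; exact h2
    exact one_ne_zero (add_left_cancel h3)
  obtain ⟨a, b, hab, hne⟩ := Function.not_injective_iff.mp hni
  have hstep : ∀ i j, s i = s j → ∀ m : ℕ, s (i + m) = s (j + m) := by
    intro i j h m
    induction m with
    | zero => simpa using h
    | succ k ih =>
        have he : (((k+1 : ℕ)) : ZMod n) = (k : ZMod n) + 1 := by push_cast; ring
        rw [he, ← add_assoc, ← add_assoc, hdag, hdag, ih]
  have hstepZ : ∀ i j, s i = s j → ∀ m : ZMod n, s (i + m) = s (j + m) := by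
    intro i j h m
    have := hstep i j h m.val
    rwa [valcast m] at this
  refine ⟨b - a, sub_ne_zero.mpr (Ne.symm hne), ?_⟩
  intro j
  have h := hstepZ a b hab (j - a)
  have e1 : j + (b - a) = b + (j - a) := by ring
  rw [e1, ← h]
  congr 1
  ring

lemma periodMulNat {n : ℕ} (s : ZMod n → ZMod n) {m : ZMod n}
    (hm : ∀ j, s (j + m) = s j) : ∀ (k : ℕ) (j : ZMod n), s (j + k * m) = s j := by
  intro k
  induction k with
  | zero => simp
  | succ i ih =>
      intro j
      have he : ((i + 1 : ℕ) : ZMod n) * m = (i : ZMod n) * m + m := by push_cast; ring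
      rw [he, ← add_assoc, hm, ih]

lemma periodMulZ {n : ℕ} [NeZero n] (s : ZMod n → ZMod n) {m : ZMod n}
    (hm : ∀ j, s (j + m) = s j) : ∀ (k : ZMod n) (j : ZMod n), s (j + k * m) = s j := by
  intro k j
  have := periodMulNat s hm k.val j
  rwa [valcast k] at this

end FE

section Parith

variable (p : ℕ)

lemma castmod (hp : 1 < p) (x : ℕ) : ((x % p ^ 2 : ℕ) : ZMod p) = (x : ZMod p) :=
  (ZMod.natCast_eq_natCast_iff _ _ _).mpr
    (Nat.ModEq.of_dvd (dvd_pow_self p two_ne_zero) (Nat.mod_modEq x (p^2)))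

def md (y : ZMod (p^2)) : ZMod p := (y.val : ZMod p)

variable (hp : 1 < p)
include hp

lemma neZeroSq : NeZero (p^2) := ⟨pow_ne_zero 2 (by omega)⟩

lemma md_add (a b : ZMod (p^2)) : md p (a+b) = md p a + md p b := by
  haveI := neZeroSq p hp
  unfold md
  rw [ZMod.val_add, castmod p hp]
  push_cast
  ring

lemma md_one : md p 1 = 1 := by
  haveI := neZeroSq p hp
  haveI : Fact (1 < p^2) := ⟨Nat.one_lt_pow two_ne_zero hp⟩
  unfold md
  rw [ZMod.val_one]
  push_cast
  ring

lemma md_sub (a b : ZMod (p^2)) : md p (a - b) = md p a - md p b := by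
  have h := md_add p hp (a - b) b
  rw [sub_add_cancel] at h
  rw [h]; ring

lemma md_natCast (x : ℕ) : md p ((x : ℕ) : ZMod (p^2)) = (x : ZMod p) := by
  haveI := neZeroSq p hp
  unfold md
  rw [ZMod.val_natCast, castmod p hp]

lemma md_pmul (w : ZMod (p^2)) : md p ((p : ZMod (p^2)) * w) = 0 := by
  haveI := neZeroSq p hp
  have h1 : (p : ZMod (p^2)) * w = ((p * w.val : ℕ) : ZMod (p^2)) := by
    push_cast
    rw [valcast w]
  rw [h1, md_natCast p hp]
  push_cast
  simp

lemma md_up (x : ZMod p) : md p ((x.val : ℕ) : ZMod (p^2)) = x := by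
  haveI : NeZero p := ⟨by omega⟩
  rw [md_natCast p hp, valcast]

lemma psq_zero : ((p : ZMod (p^2)))^2 = 0 := by
  have h : ((p^2 : ℕ) : ZMod (p^2)) = 0 := ZMod.natCast_self _
  push_cast at h
  exact h

end Parith
lemma solveEq (p : ℕ) (hp : p.Prime) (s : ZMod (p^2) → ZMod (p^2))
    (hC : ∀ a b, s (b + s a) + s a = s (a + s b) + s b) (h0 : s 0 = 1) :
    ∃ z : ZMod (p^2), ∀ m, s m = 1 + ((p : ZMod (p^2)) * z) * m := by
  haveI : Fact p.Prime := ⟨hp⟩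
  have hp1 : 1 < p := hp.one_lt
  have hp2 : 1 < p^2 := Nat.one_lt_pow two_ne_zero hp1
  haveI : NeZero p := ⟨by omega⟩
  haveI : NeZero (p^2) := ⟨by omega⟩
  haveI : Fact (1 < p^2) := ⟨hp2⟩
  have hdag : ∀ j, s (j + 1) = s j + s (s j) - 1 := by
    intro j
    have h := hC 0 j
    rw [h0, zero_add] at h
    linear_combination h
  obtain ⟨m₀, hm₀, hper₀⟩ := keyPeriod hp2 s hC h0
  -- period p
  have hperP : ∀ j, s (j + (p : ZMod (p^2))) = s j := by
    set g := Nat.gcd m₀.val (p^2) with hgdef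
    have hgd2 : g ∣ p^2 := Nat.gcd_dvd_right _ _
    have hgdp : g ∣ p := by
      obtain ⟨k, hk2, hke⟩ := (Nat.dvd_prime_pow hp).mp hgd2
      have hglt : g ∣ m₀.val := by rw [hgdef]; exact Nat.gcd_dvd_left _ _
      interval_cases k
      · rw [hke]; exact one_dvd p
      · rw [hke, pow_one]
      · exfalso
        rw [hke] at hglt
        have h2 : m₀.val < p^2 := ZMod.val_lt m₀
        have h3 : m₀.val = 0 := by
          rcases hglt with ⟨c, hc⟩
          rcases Nat.eq_zero_or_pos c with h | h
          · simp [hc, h]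
          · exfalso
            have : p^2 * 1 ≤ p^2 * c := Nat.mul_le_mul_left _ h
            omega
        exact hm₀ ((ZMod.val_eq_zero m₀).mp h3)
    have hbez : ((g : ℕ) : ZMod (p^2)) = m₀ * ((Nat.gcdA m₀.val (p^2) : ℤ) : ZMod (p^2)) := by
      have h := Nat.gcd_eq_gcd_ab m₀.val (p^2)
      have h2 := congrArg (fun z : ℤ => ((z : ℤ) : ZMod (p^2))) h
      push_cast at h2
      rw [valcast m₀] at h2
      rw [psq_zero p hp1] at h2
      rw [h2]; ring
    obtain ⟨c, hc⟩ := hgdp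
    intro j
    have hkey : (p : ZMod (p^2)) =
        (((Nat.gcdA m₀.val (p^2) : ℤ) : ZMod (p^2)) * (c : ZMod (p^2))) * m₀ := by
      have : ((p : ℕ) : ZMod (p^2)) = ((g * c : ℕ) : ZMod (p^2)) := by rw [← hc]
      rw [this]; push_cast; rw [hbez]; ring
    rw [hkey]
    exact periodMulZ s hper₀ _ j
  have hperPmul : ∀ (w : ZMod (p^2)) (j : ZMod (p^2)), s (j + (p : ZMod (p^2)) * w) = s j := by
    intro w j
    have := periodMulZ s hperP w j
    rwa [mul_comm] at this
  -- descent mod p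
  set v : ZMod p → ZMod p := fun x => md p (s ((x.val : ℕ) : ZMod (p^2))) with hvdef
  have hlift : ∀ m : ZMod (p^2), s ((((md p m).val : ℕ)) : ZMod (p^2)) = s m := by
    intro m
    have h1 : (md p m).val = m.val % p := ZMod.val_natCast _ _
    rw [h1]
    have h2 : m = ((m.val % p : ℕ) : ZMod (p^2)) + (p : ZMod (p^2)) * ((m.val / p : ℕ) : ZMod (p^2)) := by
      have h3 := Nat.mod_add_div m.val p
      have h4 := congrArg (fun x : ℕ => (x : ZMod (p^2))) h3
      push_cast at h4
      rw [valcast m] at h4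
      exact h4.symm
    conv_rhs => rw [h2]
    exact (hperPmul _ _).symm
  have hcomm : ∀ m, md p (s m) = v (md p m) := by
    intro m
    rw [hvdef]
    simp only []
    rw [hlift m]
  have hv0 : v 0 = 1 := by
    rw [hvdef]
    simp only []
    rw [ZMod.val_zero]
    push_cast
    rw [h0]
    exact md_one p hp1
  have hvC : ∀ a b : ZMod p, v (b + v a) + v a = v (a + v b) + v b := by
    intro a b
    have key : ∀ x y : ZMod p, md p (s (((y.val : ℕ) : ZMod (p^2)) + s ((x.val : ℕ) : ZMod (p^2)))) = v (y + v x) := by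
      intro x y
      rw [hcomm]
      congr 1
      rw [md_add p hp1, md_up p hp1, hcomm, md_up p hp1]
    have h := congrArg (md p) (hC ((a.val : ℕ) : ZMod (p^2)) ((b.val : ℕ) : ZMod (p^2)))
    rw [md_add p hp1, md_add p hp1, key a b, key b a, hcomm, hcomm, md_up p hp1, md_up p hp1] at h
    exact h
  obtain ⟨m₁, hm₁, hperV⟩ := keyPeriod hp1 v hvC hv0
  have hvconst : ∀ x : ZMod p, v x = 1 := by
    intro x
    have hxm : x = (x * m₁⁻¹) * m₁ := by field_simp
    have h := periodMulZ v hperV (x * m₁⁻¹) 0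
    rw [zero_add, ← hxm] at h
    rw [h, hv0]
  have hmd1 : ∀ m, md p (s m) = 1 := fun m => by rw [hcomm m, hvconst]
  have hform : ∀ j : ZMod (p^2), ∃ w : ZMod (p^2), s j = 1 + (p : ZMod (p^2)) * w := by
    intro j
    have h1 : md p (s j - 1) = 0 := by rw [md_sub p hp1, hmd1, md_one p hp1, sub_self]
    have h2 : p ∣ (s j - 1).val := by
      have : (((s j - 1).val : ℕ) : ZMod p) = 0 := h1
      exact (ZMod.natCast_eq_zero_iff _ _).mp this
    obtain ⟨w, hw⟩ := h2
    refine ⟨(w : ZMod (p^2)), ?_⟩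
    have h3 : (((s j - 1).val : ℕ) : ZMod (p^2)) = s j - 1 := valcast _
    rw [hw] at h3
    push_cast at h3
    linear_combination -h3
  have hs1 : ∀ j, s (s j) = s 1 := by
    intro j
    obtain ⟨w, hw⟩ := hform j
    rw [hw]
    exact hperPmul w 1
  obtain ⟨w1, hw1⟩ := hform 1
  have hc1 : s 1 - 1 = (p : ZMod (p^2)) * w1 := by rw [hw1]; ring
  refine ⟨w1, ?_⟩
  have hlin : ∀ k : ℕ, s ((k : ℕ) : ZMod (p^2)) = 1 + ((p : ZMod (p^2)) * w1) * ((k : ℕ) : ZMod (p^2)) := by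
    intro k
    induction k with
    | zero => push_cast; rw [h0]; ring
    | succ i ih =>
        have he : (((i+1 : ℕ)) : ZMod (p^2)) = ((i : ℕ) : ZMod (p^2)) + 1 := by push_cast; ring
        rw [he, hdag, hs1, ih, hw1]
        ring
  intro m
  have := hlin m.val
  rwa [valcast m] at this

lemma reduction (p : ℕ) (hp : p.Prime) (X : Type) (S : CycleSet X)
    (hcard : Nat.card X = p ^ 2) (htr : S.Transitive) (hcyc : IsCyclic S.permGroup) :
    ∃ t : ZMod (p ^ 2) → ZMod (p ^ 2),
      (∀ a b, t (b + t a) + t a = t (a + t b) + t b) ∧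
      (∃ a₀, IsUnit (t a₀)) ∧
      ∃ F : X → ZMod (p ^ 2), Function.Bijective F ∧ ∀ x y, F (S.σ x y) = F y + t (F x) := by
  haveI : Fact p.Prime := ⟨hp⟩
  have hp1 : 1 < p := hp.one_lt
  have hp2 : 1 < p ^ 2 := Nat.one_lt_pow two_ne_zero hp1
  haveI : NeZero (p ^ 2) := ⟨by omega⟩
  have hXne : Nonempty X ∧ Finite X := Nat.card_ne_zero.mp (by rw [hcard]; exact pow_ne_zero 2 (by omega))
  haveI : Finite X := hXne.2
  obtain ⟨x₀⟩ := hXne.1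
  have hcomm : ∀ g h : S.permGroup, g * h = h * g := by
    letI := IsCyclic.commGroup (α := S.permGroup)
    exact fun g h => mul_comm g h
  -- regularity
  have hreg : ∀ (g : S.permGroup) (x : X), (g : Equiv.Perm X) x = x → g = 1 := by
    intro g x hgx
    have hall : ∀ y, (g : Equiv.Perm X) y = y := by
      intro y
      obtain ⟨h, hh, hhy⟩ := htr x y
      have hc := hcomm g ⟨h, hh⟩
      have hc2 : (g : Equiv.Perm X) * h = h * (g : Equiv.Perm X) := by
        simpa [Subgroup.coe_mul] using congrArg Subtype.val hc
      calc (g : Equiv.Perm X) y = (g : Equiv.Perm X) (h x) := by rw [hhy]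
        _ = ((g : Equiv.Perm X) * h) x := (Equiv.Perm.mul_apply _ _ _).symm
        _ = (h * (g : Equiv.Perm X)) x := by rw [hc2]
        _ = h ((g : Equiv.Perm X) x) := Equiv.Perm.mul_apply _ _ _
        _ = h x := by rw [hgx]
        _ = y := hhy
    apply Subtype.ext
    apply Equiv.ext
    intro y
    simpa using hall y
  -- orbit bijection
  have horb : Function.Bijective (fun g : S.permGroup => (g : Equiv.Perm X) x₀) := by
    constructor
    · intro g h hgh
      have h1 : ((h⁻¹ * g : S.permGroup) : Equiv.Perm X) x₀ = x₀ := by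
        rw [Subgroup.coe_mul, Equiv.Perm.mul_apply]
        simp only at hgh
        rw [hgh]
        have : ((h⁻¹ : S.permGroup) : Equiv.Perm X) = ((h : Equiv.Perm X))⁻¹ := rfl
        rw [this]
        exact Equiv.symm_apply_apply _ _
      have := hreg _ _ h1
      rwa [inv_mul_eq_one, eq_comm] at this
    · intro y
      obtain ⟨g, hg, hgy⟩ := htr x₀ y
      exact ⟨⟨g, hg⟩, hgy⟩
  have hcardG : Nat.card S.permGroup = p ^ 2 := by
    rw [Nat.card_eq_of_bijective _ horb, hcard]
  obtain ⟨γ, hγ⟩ := IsCyclic.exists_generator (α := S.permGroup)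
  have hord : orderOf γ = p ^ 2 := by
    rw [orderOf_eq_card_of_forall_mem_zpowers hγ, hcardG]
  set φ : ZMod (p ^ 2) → X := fun n => ((γ ^ n.val : S.permGroup) : Equiv.Perm X) x₀ with hφdef
  have hφinj : Function.Injective φ := by
    intro m n h
    have h1 : (γ ^ m.val : S.permGroup) = γ ^ n.val := horb.1 h
    have h2 : m.val ≡ n.val [MOD p ^ 2] := by
      have h2' := pow_eq_pow_iff_modEq.mp h1
      rwa [hord] at h2'
    have h3 : m.val = n.val := by
      have hm := ZMod.val_lt m
      have hn := ZMod.val_lt n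
      unfold Nat.ModEq at h2
      rwa [Nat.mod_eq_of_lt hm, Nat.mod_eq_of_lt hn] at h2
    exact ZMod.val_injective _ h3
  have hφbij : Function.Bijective φ :=
    (Nat.bijective_iff_injective_and_card φ).mpr ⟨hφinj, by rw [Nat.card_zmod, hcard]⟩
  have hσmem : ∀ x, S.σ x ∈ S.permGroup := fun x => Subgroup.subset_closure ⟨x, rfl⟩
  have hστ : ∀ x : X, ∃ n : ZMod (p ^ 2), γ ^ n.val = (⟨S.σ x, hσmem x⟩ : S.permGroup) := by
    intro x
    obtain ⟨k, hk⟩ := hγ ⟨S.σ x, hσmem x⟩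
    have hk' : γ ^ k = (⟨S.σ x, hσmem x⟩ : S.permGroup) := hk
    refine ⟨((k : ℤ) : ZMod (p ^ 2)), ?_⟩
    have h1 : (((((k : ℤ) : ZMod (p ^ 2))).val : ℤ)) ≡ k [ZMOD ((p ^ 2 : ℕ) : ℤ)] := by
      rw [← ZMod.intCast_eq_intCast_iff]
      push_cast
      exact ZMod.natCast_rightInverse _
    have h2 : γ ^ ((((k : ℤ) : ZMod (p ^ 2))).val : ℤ) = γ ^ k := by
      rw [zpow_eq_zpow_iff_modEq, hord]
      exact h1
    rw [← hk', ← h2, zpow_natCast]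
  choose τ hτ using hστ
  set t : ZMod (p ^ 2) → ZMod (p ^ 2) := fun n => τ (φ n) with htdef
  have hfund : ∀ (x : X) (n : ZMod (p ^ 2)), S.σ x (φ n) = φ (n + τ x) := by
    intro x n
    have h1 : (⟨S.σ x, hσmem x⟩ : S.permGroup) * γ ^ n.val = γ ^ ((n + τ x).val) := by
      rw [← hτ x, ← pow_add]
      apply pow_eq_pow_iff_modEq.mpr
      rw [hord, ZMod.val_add]
      calc (τ x).val + n.val ≡ (n.val + (τ x).val) [MOD p ^ 2] := by rw [Nat.add_comm]
        _ ≡ (n.val + (τ x).val) % p ^ 2 [MOD p ^ 2] := (Nat.mod_modEq _ _).symm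
    have h2 := congrArg (fun g : S.permGroup => (g : Equiv.Perm X) x₀) h1
    simp only [Subgroup.coe_mul, Equiv.Perm.mul_apply] at h2
    exact h2
  have hC : ∀ a b, t (b + t a) + t a = t (a + t b) + t b := by
    intro a b
    have h := S.cycl (φ a) (φ b) (φ 0)
    have e1 : S.σ (φ a) (φ 0) = φ (0 + t a) := hfund _ _
    have e2 : S.σ (φ b) (φ 0) = φ (0 + t b) := hfund _ _
    have e3 : S.σ (φ a) (φ b) = φ (b + t a) := hfund _ _
    have e4 : S.σ (φ b) (φ a) = φ (a + t b) := hfund _ _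
    rw [e1, e2, e3, e4, hfund, hfund] at h
    have h5 := hφinj h
    have h6 : τ (φ (b + t a)) = t (b + t a) := rfl
    have h7 : τ (φ (a + t b)) = t (a + t b) := rfl
    rw [h6, h7] at h5
    linear_combination h5
  have hunit : ∃ a₀, IsUnit (t a₀) := by
    by_contra hno
    push_neg at hno
    have hdvd : ∀ a, p ∣ (t a).val := by
      intro a
      by_contra hnd
      apply hno a
      have h1 : Nat.Coprime ((t a).val) (p ^ 2) :=
        Nat.Coprime.pow_right 2 (Nat.Coprime.symm ((Nat.Prime.coprime_iff_not_dvd hp).mpr hnd))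
      have h2 := (ZMod.isUnit_iff_coprime ((t a).val) (p ^ 2)).mpr h1
      rwa [ZMod.natCast_rightInverse _] at h2
    have hsub : ∀ x : X, (⟨S.σ x, hσmem x⟩ : S.permGroup) ∈ Subgroup.zpowers (γ ^ p) := by
      intro x
      obtain ⟨a, ha⟩ := hφbij.2 x
      have h1 : p ∣ (τ x).val := by
        have := hdvd a
        rw [htdef] at this
        simp only at this
        rwa [ha] at this
      obtain ⟨c, hc⟩ := h1
      refine ⟨(c : ℤ), ?_⟩
      show (γ ^ p) ^ (c : ℤ) = (⟨S.σ x, hσmem x⟩ : S.permGroup)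
      rw [zpow_natCast, ← pow_mul, ← hc]
      exact hτ x
    have htop : ∀ h : S.permGroup, h ∈ Subgroup.zpowers (γ ^ p) := by
      intro h
      have hh := h.2
      have key : ∀ (g : Equiv.Perm X) (hg : g ∈ S.permGroup),
          (⟨g, hg⟩ : S.permGroup) ∈ Subgroup.zpowers (γ ^ p) := by
        intro g hg
        induction hg using Subgroup.closure_induction with
        | mem x hx =>
            obtain ⟨w, rfl⟩ := hx
            exact hsub w
        | one => exact one_mem _
        | mul x y hx hy ihx ihy => exact mul_mem ihx ihy
        | inv x hx ihx => exact inv_mem ihx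
      have := key h.1 h.2
      simpa using this
    have h1 : Subgroup.zpowers (γ ^ p) = ⊤ := (Subgroup.eq_top_iff' _).mpr htop
    have h2 : orderOf (γ ^ p) = p := by
      rw [orderOf_pow, hord]
      have : Nat.gcd (p ^ 2) p = p := Nat.gcd_eq_right (dvd_pow_self p two_ne_zero)
      rw [this, pow_two, Nat.mul_div_cancel _ (by omega)]
    have h3 : Nat.card (Subgroup.zpowers (γ ^ p)) = p := by rw [Nat.card_zpowers, h2]
    rw [h1] at h3
    have h4 : Nat.card (⊤ : Subgroup S.permGroup) = Nat.card S.permGroup := Subgroup.card_top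
    rw [h4, hcardG] at h3
    nlinarith
  refine ⟨t, hC, hunit, ?_⟩
  set e := Equiv.ofBijective φ hφbij with hedef
  refine ⟨e.symm, e.symm.bijective, ?_⟩
  intro x y
  have hx : φ (e.symm x) = x := e.apply_symm_apply x
  have hy : φ (e.symm y) = y := e.apply_symm_apply y
  have h1 : S.σ x y = φ (e.symm y + τ x) := by
    conv_lhs => rw [← hy]
    exact hfund x (e.symm y)
  have h2 : τ x = t (e.symm x) := by
    rw [htdef]
    simp only []
    rw [hx]
  rw [h1, h2]
  exact e.symm_apply_apply _

section Aux2

lemma shiftPerm_apply (p : ℕ) (f : ZMod p → Fin p) (i y : ZMod (p^2)) :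
    shiftPerm p f i y =
      y + (1 + (p : ZMod (p^2)) * (((f ((i.val : ZMod p))).val : ℕ) : ZMod (p^2))) := rfl

lemma pMulInjNat (p : ℕ) (hp1 : 1 < p) {u v : ℕ} (hu : u < p) (hv : v < p)
    (h : (p : ZMod (p^2)) * ((u : ℕ) : ZMod (p^2)) = (p : ZMod (p^2)) * ((v : ℕ) : ZMod (p^2))) :
    u = v := by
  have h2 : ((p * u : ℕ) : ZMod (p^2)) = ((p * v : ℕ) : ZMod (p^2)) := by push_cast; exact h
  have h3 := (ZMod.natCast_eq_natCast_iff _ _ _).mp h2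
  unfold Nat.ModEq at h3
  rw [Nat.mod_eq_of_lt (by nlinarith), Nat.mod_eq_of_lt (by nlinarith)] at h3
  exact Nat.eq_of_mul_eq_mul_left (by omega) h3

lemma good_of (p : ℕ) [NeZero p] (hp : p.Prime) (d : ZMod p) (hd : d ≠ 0) :
    Good p (fun x => (⟨(d * x).val, ZMod.val_lt _⟩ : Fin p)) := by
  haveI : Fact p.Prime := ⟨hp⟩
  refine ⟨?_, by simp, ?_⟩
  · have hinj : Function.Injective (fun x => (⟨(d * x).val, ZMod.val_lt _⟩ : Fin p)) := by
      intro x y h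
      have h1 : (d * x).val = (d * y).val := congrArg Fin.val h
      have h2 : d * x = d * y := ZMod.val_injective _ h1
      exact mul_left_cancel₀ hd h2
    exact (Nat.bijective_iff_injective_and_card _).mpr
      ⟨hinj, by rw [Nat.card_zmod, Nat.card_eq_fintype_card, Fintype.card_fin]⟩
  · intro i j
    simp only []
    rw [valcast, valcast, valcast, valcast]
    ring

lemma good_lin (p : ℕ) (hp : p.Prime) (f : ZMod p → Fin p) (hf : Good p f) :
    ∀ x : ZMod p, ((f x).val : ZMod p) = ((f 1).val : ZMod p) * x := by
  haveI : NeZero p := ⟨hp.ne_zero⟩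
  have hstep : ∀ j : ZMod p,
      ((f (j+1)).val : ZMod p) = ((f j).val : ZMod p) + ((f 1).val : ZMod p) := by
    intro j
    have h := hf.2.2 0 j
    rw [zero_add, hf.2.1] at h
    push_cast at h
    linear_combination -h
  have hnat : ∀ k : ℕ, ((f ((k : ℕ) : ZMod p)).val : ZMod p) = ((f 1).val : ZMod p) * ((k : ℕ) : ZMod p) := by
    intro k
    induction k with
    | zero =>
        push_cast
        rw [hf.2.1]
        push_cast
        ring
    | succ i ih =>
        have he : (((i+1 : ℕ)) : ZMod p) = ((i : ℕ) : ZMod p) + 1 := by push_cast; ring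
        rw [he, hstep, ih]
        ring
  intro x
  have := hnat x.val
  rwa [valcast x] at this

lemma pcancel (p : ℕ) (hp1 : 1 < p) {a b : ZMod (p^2)}
    (h : (p : ZMod (p^2)) * a = (p : ZMod (p^2)) * b) : md p a = md p b := by
  haveI : NeZero (p^2) := neZeroSq p hp1
  have h1 : (p : ZMod (p^2)) * (a - b) = 0 := by linear_combination h
  have h2 : ((p * (a-b).val : ℕ) : ZMod (p^2)) = 0 := by
    push_cast
    rw [valcast]
    exact h1
  have h3 : p^2 ∣ p * (a-b).val := (ZMod.natCast_eq_zero_iff _ _).mp h2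
  have h4 : p ∣ (a-b).val := by
    rcases h3 with ⟨w, hw⟩
    refine ⟨w, ?_⟩
    have hppos : 0 < p := by omega
    apply Nat.eq_of_mul_eq_mul_left hppos
    rw [hw]
    ring
  have h5 : md p (a - b) = 0 := (ZMod.natCast_eq_zero_iff _ _).mpr h4
  rw [md_sub p hp1] at h5
  linear_combination h5

end Aux2

lemma pmul_mod (p : ℕ) (hp1 : 1 < p) (A : ℕ) :
    ((p * A : ℕ) : ZMod (p^2)) = ((p * (A % p) : ℕ) : ZMod (p^2)) := by
  apply (ZMod.natCast_eq_natCast_iff _ _ _).mpr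
  rw [pow_two]
  exact Nat.ModEq.mul_left' _ ((Nat.mod_modEq _ _).symm)
/-- Classification: up to isomorphism there are exactly `p` indecomposable
cycle sets of cardinality `p^2` with cyclic permutation group: one of level 1
(`i*j = j+1` on `Z/p^2Z`) and `p-1` of level 2 coming from `Good` maps. -/
theorem stmt11 (p : ℕ) (hp : p.Prime) :
    (∀ (X : Type) (S : CycleSet X), Nat.card X = p ^ 2 → S.Transitive →
      IsCyclic S.permGroup →
        (∃ T : CycleSet (ZMod (p ^ 2)),
          (∀ i, T.σ i = Equiv.addRight (1 : ZMod (p ^ 2))) ∧ S.Isomorphic T) ∨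
        (∃ f : ZMod p → Fin p, Good p f ∧
          ∃ T : CycleSet (ZMod (p ^ 2)),
            (∀ i, T.σ i = shiftPerm p f i) ∧ S.Isomorphic T)) ∧
    (∀ T : CycleSet (ZMod (p ^ 2)),
      (∀ i, T.σ i = Equiv.addRight (1 : ZMod (p ^ 2))) → T.MultipermLevel 1) ∧
    (∀ (f : ZMod p → Fin p), Good p f → ∀ T : CycleSet (ZMod (p ^ 2)),
      (∀ i, T.σ i = shiftPerm p f i) → T.MultipermLevel 2) ∧
    (∀ (f g : ZMod p → Fin p), Good p f → Good p g →
      ∀ S T : CycleSet (ZMod (p ^ 2)),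
        (∀ i, S.σ i = shiftPerm p f i) → (∀ i, T.σ i = shiftPerm p g i) →
          (S.Isomorphic T ↔ f = g)) ∧
    (∀ (f : ZMod p → Fin p), Good p f → ∀ S T : CycleSet (ZMod (p ^ 2)),
      (∀ i, S.σ i = Equiv.addRight (1 : ZMod (p ^ 2))) →
        (∀ i, T.σ i = shiftPerm p f i) → ¬ S.Isomorphic T) ∧
    Nat.card {f : ZMod p → Fin p // Good p f} = p - 1 := by
  haveI : Fact p.Prime := ⟨hp⟩
  have hp1 : 1 < p := hp.one_lt
  have hp2 : 1 < p ^ 2 := Nat.one_lt_pow two_ne_zero hp1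
  haveI : NeZero p := ⟨by omega⟩
  haveI : NeZero (p ^ 2) := ⟨by omega⟩
  haveI : Fact (1 < p) := ⟨hp1⟩
  haveI : Fact (1 < p ^ 2) := ⟨hp2⟩
  have mform : ∀ z w : ZMod (p^2), md p (z + (1 + (p : ZMod (p^2)) * w)) = md p z + 1 := by
    intro z w
    rw [md_add p hp1, md_add p hp1, md_one p hp1, md_pmul p hp1]
    ring
  refine ⟨?_, ?_, ?_, ?_, ?_, ?_⟩
  · -- PART 1 : classification
    intro X S hcard htr hcyc
    obtain ⟨t, hC, ⟨a₀, hu⟩, F0, hF0b, hF0⟩ := reduction p hp X S hcard htr hcyc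
    set u := hu.unit with hudef
    set w : ZMod (p^2) := ((u : (ZMod (p^2))ˣ) : ZMod (p^2)) with hwdef
    set wi : ZMod (p^2) := ((u⁻¹ : (ZMod (p^2))ˣ) : ZMod (p^2)) with hwidef
    have huspec : w = t a₀ := hu.unit_spec
    have huv : w * wi = 1 := u.mul_inv
    have hvu : wi * w = 1 := u.inv_mul
    have hs0 : wi * t (w * 0 + a₀) = 1 := by
      rw [mul_zero, zero_add, ← huspec]
      exact hvu
    have he : ∀ a b : ZMod (p^2),
        w * (b + wi * t (w * a + a₀)) + a₀ = (w * b + a₀) + t (w * a + a₀) := by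
      intro a b
      linear_combination (t (w * a + a₀)) * huv
    have hCs : ∀ a b : ZMod (p^2),
        wi * t (w * (b + wi * t (w * a + a₀)) + a₀)
          + wi * t (w * a + a₀)
        = wi * t (w * (a + wi * t (w * b + a₀)) + a₀)
          + wi * t (w * b + a₀) := by
      intro a b
      have hmain := hC (w * a + a₀) (w * b + a₀)
      rw [he a b, he b a]
      linear_combination wi * hmain
    obtain ⟨z, hz⟩ := solveEq p hp (fun x => wi * t (w * x + a₀)) hCs hs0
    set c : ZMod (p^2) := (p : ZMod (p^2)) * z with hcdef
    have ht : ∀ x, t x = w + c * (x - a₀) := by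
      intro x
      have h1 := hz (wi * (x - a₀))
      have h2 : w * (wi * (x - a₀)) + a₀ = x := by linear_combination (x - a₀) * huv
      rw [h2] at h1
      linear_combination w * h1 - (t x - c * (x - a₀)) * huv
    have hcc : c * c = 0 := by
      rw [hcdef]
      linear_combination (z * z) * psq_zero p hp1
    set F : X → ZMod (p^2) := fun x => wi * (F0 x - a₀) with hFdef
    have hFb : Function.Bijective F := by
      constructor
      · intro x y hxy
        simp only [hFdef] at hxy
        have h2 : F0 x = F0 y := by
          have h3 := congrArg (fun q => w * q) hxy
          linear_combination h3 - (F0 x - F0 y) * huv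
        exact hF0b.1 h2
      · intro v
        obtain ⟨x, hx⟩ := hF0b.2 (w * v + a₀)
        refine ⟨x, ?_⟩
        simp only [hFdef]
        rw [hx]
        linear_combination v * hvu
    have hFσ : ∀ x y, F (S.σ x y) = F y + (1 + c * F x) := by
      intro x y
      simp only [hFdef]
      rw [hF0 x y, ht (F0 x)]
      linear_combination huv
    by_cases hcz : c = 0
    · left
      refine ⟨⟨fun _ => Equiv.addRight (1 : ZMod (p^2)), fun x y z => rfl⟩,
        fun i => rfl, F, hFb, ?_⟩
      intro x y
      have h1 := hFσ x y
      rw [hcz] at h1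
      rw [h1]
      show F y + (1 + 0 * F x) = F y + 1
      ring
    · right
      have hpc : p ∣ c.val := by
        have h1 : md p c = 0 := by rw [hcdef]; exact md_pmul p hp1 z
        exact (ZMod.natCast_eq_zero_iff _ _).mp h1
      set δ := c.val / p with hδdef
      have hδp : c.val = p * δ := (Nat.mul_div_cancel' hpc).symm
      have hδlt : δ < p := by
        have h2 : c.val < p^2 := ZMod.val_lt c
        have h2' : c.val < p * p := by rw [← pow_two]; exact h2
        exact Nat.div_lt_of_lt_mul h2'
      set d : ZMod p := (δ : ZMod p) with hddef
      have hdne : d ≠ 0 := by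
        intro h
        have h1 : p ∣ δ := (ZMod.natCast_eq_zero_iff _ _).mp h
        have h2 : δ = 0 := by
          by_contra hne
          have h4 : p ≤ δ := Nat.le_of_dvd (Nat.pos_of_ne_zero hne) h1
          omega
        apply hcz
        have h3 : c.val = 0 := by rw [hδp, h2, mul_zero]
        exact (ZMod.val_eq_zero c).mp h3
      have KI : ∀ i : ZMod (p^2),
          c * i = (p : ZMod (p^2)) * (((d * ((i.val : ZMod p))).val : ℕ) : ZMod (p^2)) := by
        intro i
        have e1 : d * ((i.val : ℕ) : ZMod p) = ((δ * i.val : ℕ) : ZMod p) := by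
          rw [hddef]; push_cast; ring
        rw [e1, ZMod.val_natCast]
        have e2 : c * i = ((p * (δ * i.val) : ℕ) : ZMod (p^2)) := by
          conv_lhs => rw [← valcast c, ← valcast i]
          rw [hδp]
          push_cast
          ring
        rw [e2, pmul_mod p hp1 (δ * i.val)]
        push_cast
        ring
      refine ⟨fun x => ⟨(d * x).val, ZMod.val_lt _⟩, good_of p hp d hdne,
        ⟨fun i => Equiv.addRight (1 + c * i), ?_⟩, ?_, F, hFb, ?_⟩
      · intro x y z
        show (z + (1 + c * x)) + (1 + c * (y + (1 + c * x)))
           = (z + (1 + c * y)) + (1 + c * (x + (1 + c * y)))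
        linear_combination (x - y) * hcc
      · intro i
        show Equiv.addRight (1 + c * i) = shiftPerm p _ i
        unfold shiftPerm
        exact congrArg Equiv.addRight (by rw [KI i])
      · intro x y
        rw [hFσ x y]
        rfl
  · -- PART 2 : level 1
    intro T hT
    constructor
    · intro x y z
      show T.σ x z = T.σ y z
      rw [hT, hT]
    · intro k hk
      interval_cases k
      intro hall
      exact zero_ne_one (α := ZMod (p^2)) (hall 0 1)
  · -- PART 3 : level 2
    intro f hGf T hT
    have happ : ∀ i y : ZMod (p^2), T.σ i y
        = y + (1 + (p : ZMod (p^2)) * (((f ((i.val : ZMod p))).val : ℕ) : ZMod (p^2))) := by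
      intro i y; rw [hT]; rfl
    constructor
    · intro x y z z'
      show T.σ (T.σ x z) z' = T.σ (T.σ y z) z'
      have hm : (((T.σ x z).val : ℕ) : ZMod p) = (((T.σ y z).val : ℕ) : ZMod p) := by
        have e1 : md p (T.σ x z) = md p (T.σ y z) := by
          rw [happ x z, happ y z, mform, mform]
        exact e1
      rw [happ (T.σ x z) z', happ (T.σ y z) z', hm]
    · intro k hk
      interval_cases k
      · intro hall
        exact zero_ne_one (α := ZMod (p^2)) (hall 0 1)
      · intro hall
        have h : T.σ 0 0 = T.σ 1 0 := hall 0 1 0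
        rw [happ, happ] at h
        have h2 : (p : ZMod (p^2)) * (((f (((0 : ZMod (p^2)).val : ZMod p))).val : ℕ) : ZMod (p^2))
            = (p : ZMod (p^2)) * (((f (((1 : ZMod (p^2)).val : ZMod p))).val : ℕ) : ZMod (p^2)) := by
          linear_combination h
        have h3 := pMulInjNat p hp1 (Fin.is_lt _) (Fin.is_lt _) h2
        rw [ZMod.val_zero, ZMod.val_one] at h3
        have h4 : f 0 = f 1 := by
          apply Fin.val_injective
          rw [show ((0:ℕ) : ZMod p) = 0 from Nat.cast_zero, show ((1:ℕ) : ZMod p) = 1 from Nat.cast_one] at h3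
          exact h3
        have h5 : (0 : ZMod p) = 1 := hGf.1.1 h4
        exact zero_ne_one h5
  · -- PART 4 : iso iff equal
    intro f g hGf hGg S T hS hT
    have happS : ∀ i y : ZMod (p^2), S.σ i y
        = y + (1 + (p : ZMod (p^2)) * (((f ((i.val : ZMod p))).val : ℕ) : ZMod (p^2))) := by
      intro i y; rw [hS]; rfl
    have happT : ∀ i y : ZMod (p^2), T.σ i y
        = y + (1 + (p : ZMod (p^2)) * (((g ((i.val : ZMod p))).val : ℕ) : ZMod (p^2))) := by
      intro i y; rw [hT]; rfl
    constructor
    · rintro ⟨F, hFb, hF⟩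
      set A : ZMod (p^2) :=
        1 + (p : ZMod (p^2)) * (((g (((F 0).val : ZMod p))).val : ℕ) : ZMod (p^2)) with hAdef
      have hone : ∀ y, F (y + 1) = F y + A := by
        intro y
        have h1 := hF 0 y
        rw [happS, happT] at h1
        have e0 : y + ((1 : ZMod (p^2)) + (p : ZMod (p^2)) * (((f (((0 : ZMod (p^2)).val : ZMod p))).val : ℕ) : ZMod (p^2))) = y + 1 := by
          rw [ZMod.val_zero, Nat.cast_zero, hGf.2.1, Nat.cast_zero, mul_zero, add_zero]
        rw [e0] at h1
        exact h1
      have haff : ∀ y, F y = F 0 + y * A := by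
        have hnat : ∀ k : ℕ, F ((k : ℕ) : ZMod (p^2)) = F 0 + ((k : ℕ) : ZMod (p^2)) * A := by
          intro k
          induction k with
          | zero => simp
          | succ i ih =>
              have he2 : (((i+1 : ℕ)) : ZMod (p^2)) = ((i : ℕ) : ZMod (p^2)) + 1 := by
                push_cast; ring
              rw [he2, hone, ih]
              ring
        intro y
        have := hnat y.val
        rwa [valcast] at this
      have heq : ∀ x : ZMod (p^2),
          (1 + (p : ZMod (p^2)) * (((f ((x.val : ZMod p))).val : ℕ) : ZMod (p^2))) * A
          = 1 + (p : ZMod (p^2)) * (((g (((F x).val : ZMod p))).val : ℕ) : ZMod (p^2)) := by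
        intro x
        have h1 := hF x 0
        rw [happS, happT] at h1
        rw [haff (0 + (1 + (p : ZMod (p^2)) * (((f ((x.val : ZMod p))).val : ℕ) : ZMod (p^2))))] at h1
        linear_combination h1
      have hmdF : ∀ y, md p (F y) = md p (F 0) + md p y := by
        intro y
        have e1 : F y = (F 0 + y) + (p : ZMod (p^2)) *
            (y * (((g (((F 0).val : ZMod p))).val : ℕ) : ZMod (p^2))) := by
          rw [haff y, hAdef]; ring
        rw [e1, md_add p hp1, md_pmul p hp1, add_zero, md_add p hp1]
      have hkey : ∀ w : ZMod p,
          ((f w).val : ZMod p) + ((g (((F 0).val : ZMod p))).val : ZMod p)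
            = ((g (((F ((w.val : ℕ) : ZMod (p^2))).val : ZMod p))).val : ZMod p) := by
        intro w
        have h1 := heq ((w.val : ℕ) : ZMod (p^2))
        have hup : ((((w.val : ℕ) : ZMod (p^2)).val : ℕ) : ZMod p) = w := md_up p hp1 w
        rw [hup] at h1
        have h2 : (p : ZMod (p^2)) *
            ((((f w).val : ℕ) : ZMod (p^2)) + (((g (((F 0).val : ZMod p))).val : ℕ) : ZMod (p^2)))
            = (p : ZMod (p^2)) * (((g (((F ((w.val : ℕ) : ZMod (p^2))).val : ZMod p))).val : ℕ) : ZMod (p^2)) := by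
          rw [hAdef] at h1
          linear_combination h1 -
            ((((f w).val : ℕ) : ZMod (p^2)) * (((g (((F 0).val : ZMod p))).val : ℕ) : ZMod (p^2))) * psq_zero p hp1
        have h3 := pcancel p hp1 h2
        rw [md_add p hp1, md_natCast p hp1, md_natCast p hp1, md_natCast p hp1] at h3
        exact h3
      have hCfCg : ((f 1).val : ZMod p) = ((g 1).val : ZMod p) := by
        have h1 := hkey 1
        have e1 : (((1 : ZMod p).val : ℕ) : ZMod (p^2)) = 1 := by
          rw [ZMod.val_one]; exact Nat.cast_one
        rw [e1] at h1
        have hup1 : (((F (1 : ZMod (p^2))).val : ℕ) : ZMod p) = (((F 0).val : ℕ) : ZMod p) + 1 := by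
          have h2 := hmdF 1
          rw [md_one p hp1] at h2
          exact h2
        rw [hup1] at h1
        rw [good_lin p hp g hGg (((F 0).val : ℕ) : ZMod p),
            good_lin p hp g hGg ((((F 0).val : ℕ) : ZMod p) + 1)] at h1
        rw [good_lin p hp g hGg 1]
        linear_combination h1
      funext x
      apply Fin.val_injective
      have hfg : ((f x).val : ZMod p) = ((g x).val : ZMod p) := by
        rw [good_lin p hp f hGf x, good_lin p hp g hGg x, hCfCg]
      have h6 := congrArg ZMod.val hfg
      rwa [ZMod.val_natCast, ZMod.val_natCast, Nat.mod_eq_of_lt (Fin.is_lt _),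
        Nat.mod_eq_of_lt (Fin.is_lt _)] at h6
    · rintro rfl
      refine ⟨id, Function.bijective_id, fun x y => ?_⟩
      rw [hS, hT]
      rfl
  · -- PART 5 : not isomorphic
    intro f hGf S T hS hT hiso
    obtain ⟨F, hFb, hF⟩ := hiso
    have happT : ∀ i y : ZMod (p^2), T.σ i y
        = y + (1 + (p : ZMod (p^2)) * (((f ((i.val : ZMod p))).val : ℕ) : ZMod (p^2))) := by
      intro i y; rw [hT]; rfl
    have key : ∀ x : ZMod (p^2), (((F x).val : ℕ) : ZMod p) = (((F 0).val : ℕ) : ZMod p) := by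
      intro x
      have h1 := hF x 0
      have h2 := hF 0 0
      rw [hS x] at h1
      rw [hS 0] at h2
      have h3 : T.σ (F x) (F 0) = T.σ (F 0) (F 0) := by rw [← h1, ← h2]
      rw [happT, happT] at h3
      have h4 : (p : ZMod (p^2)) * (((f (((F x).val : ZMod p))).val : ℕ) : ZMod (p^2))
          = (p : ZMod (p^2)) * (((f (((F 0).val : ZMod p))).val : ℕ) : ZMod (p^2)) := by
        linear_combination h3
      have h5 := pMulInjNat p hp1 (Fin.is_lt _) (Fin.is_lt _) h4
      have h6 : f (((F x).val : ZMod p)) = f (((F 0).val : ZMod p)) := Fin.val_injective h5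
      exact hGf.1.1 h6
    obtain ⟨x0, hx0⟩ := hFb.2 0
    obtain ⟨x1, hx1⟩ := hFb.2 1
    have h7 := (key x0).trans (key x1).symm
    rw [hx0, hx1, ZMod.val_zero, ZMod.val_one] at h7
    push_cast at h7
    exact zero_ne_one h7
  · -- PART 6 : count
    have E : {f : ZMod p → Fin p // Good p f} ≃ {c : ZMod p // c ≠ 0} :=
      { toFun := fun fh => ⟨((fh.1 1).val : ZMod p), by
          obtain ⟨f, hf⟩ := fh
          intro h0
          have h1 : p ∣ (f 1).val := (ZMod.natCast_eq_zero_iff _ _).mp h0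
          have h2 : (f 1).val = 0 := by
            by_contra hne
            have h4 : p ≤ (f 1).val := Nat.le_of_dvd (Nat.pos_of_ne_zero hne) h1
            have h5 := Fin.is_lt (f 1)
            omega
          have h3 : f 1 = f 0 := Fin.val_injective (by rw [h2, hf.2.1])
          have h4 : (1 : ZMod p) = 0 := hf.1.1 h3
          exact one_ne_zero h4⟩
        invFun := fun ch => ⟨fun x => ⟨(ch.1 * x).val, ZMod.val_lt _⟩, good_of p hp ch.1 ch.2⟩
        left_inv := fun fh => by
          obtain ⟨f, hf⟩ := fh
          apply Subtype.ext
          funext x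
          apply Fin.val_injective
          show ((((f 1).val : ZMod p) * x).val : ℕ) = (f x).val
          rw [← good_lin p hp f hf x]
          rw [ZMod.val_natCast, Nat.mod_eq_of_lt (Fin.is_lt _)]
        right_inv := fun ch => by
          obtain ⟨c, hc⟩ := ch
          apply Subtype.ext
          show ((((c * 1).val : ℕ)) : ZMod p) = c
          rw [mul_one, valcast] }
    rw [Nat.card_congr E, Nat.card_eq_fintype_card, Fintype.card_subtype_compl, ZMod.card, Fintype.card_subtype_eq]
end

section
/- Let X be a finite indecomposable cycle set of multipermutational level 2 with cyclic permutation group G(X) = ⟨α⟩. If α^a and α^b both lie in σ(X) (i.e., are left multiplications of X), then a ≡ b (mod |σ(X)|). -/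
namespace CycleSet
variable {X : Type*}

lemma rel_one_iff (S : CycleSet X) (x y : X) : S.rel 1 x y ↔ S.σ x = S.σ y := by
  constructor
  · intro h; exact Equiv.ext fun z => h z
  · intro h z; rw [show S.rel 0 = Eq from rfl, h]

lemma cycl' (S : CycleSet X) (x y : X) :
    S.σ (S.σ x y) * S.σ x = S.σ (S.σ y x) * S.σ y :=
  Equiv.ext fun z => S.cycl x y z

lemma ratio_const (S : CycleSet X) (hc : ∀ x y, Commute (S.σ x) (S.σ y))
    (h2 : ∀ x y z : X, S.σ (S.σ x z) = S.σ (S.σ y z)) :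
    ∀ g ∈ S.permGroup, ∀ z w : X,
      S.σ (g z) * (S.σ z)⁻¹ = S.σ (g w) * (S.σ w)⁻¹ := by
  intro g hg
  induction hg using Subgroup.closure_induction with
  | mem x hx =>
    obtain ⟨x, rfl⟩ := hx
    intro z w
    have key : S.σ (S.σ x z) * S.σ w = S.σ (S.σ x w) * S.σ z := by
      rw [h2 x w z, h2 x z w]; exact S.cycl' w z
    have hcm : S.σ z * (S.σ w)⁻¹ * (S.σ z)⁻¹ = (S.σ w)⁻¹ := by
      rw [(hc z w).inv_right.eq, mul_assoc, mul_inv_cancel, mul_one]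
    calc S.σ (S.σ x z) * (S.σ z)⁻¹
        = (S.σ (S.σ x z) * S.σ w) * ((S.σ w)⁻¹ * (S.σ z)⁻¹) := by group
      _ = (S.σ (S.σ x w) * S.σ z) * ((S.σ w)⁻¹ * (S.σ z)⁻¹) := by rw [key]
      _ = S.σ (S.σ x w) * (S.σ z * (S.σ w)⁻¹ * (S.σ z)⁻¹) := by group
      _ = S.σ (S.σ x w) * (S.σ w)⁻¹ := by rw [hcm]
  | one => intro z w; simp
  | mul g h hg hh ihg ihh =>
    intro z w
    have expand : ∀ u : X, S.σ ((g * h) u) * (S.σ u)⁻¹ =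
        (S.σ (g (h u)) * (S.σ (h u))⁻¹) * (S.σ (h u) * (S.σ u)⁻¹) := by
      intro u; simp [Equiv.Perm.mul_apply, mul_assoc]
    rw [expand z, expand w, ihg (h z) (h w), ihh z w]
  | inv g hg ih =>
    intro z w
    have hz := ih (g⁻¹ z) (g⁻¹ w)
    simp only [show ∀ u, g (g⁻¹ u) = u from fun u => (Equiv.eq_symm_apply g).mp rfl] at hz
    have := congrArg Inv.inv hz
    simpa [mul_inv_rev] using this

end CycleSet

/-- In a finite indecomposable cycle set of multipermutational level 2 with
cyclic permutation group generated by `α`, if `α^a` and `α^b` are left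
multiplications then `a ≡ b (mod |σ(X)|)`. -/
theorem stmt12 {X : Type*} [Finite X] (S : CycleSet X) (α : Equiv.Perm X)
    (hgen : S.permGroup = Subgroup.zpowers α) (htr : S.Transitive)
    (hlvl : S.MultipermLevel 2) (a b : ℕ)
    (ha : α ^ a ∈ Set.range S.σ) (hb : α ^ b ∈ Set.range S.σ) :
    a ≡ b [MOD S.retCard 1] := by
  classical
  obtain ⟨x₁, hx1⟩ := ha
  obtain ⟨y₁, hy1⟩ := hb
  have hmemσ : ∀ x : X, S.σ x ∈ S.permGroup := fun x =>
    Subgroup.subset_closure ⟨x, rfl⟩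
  have hzp : ∀ x : X, ∃ k : ℤ, α ^ k = S.σ x := by
    intro x
    have h := hmemσ x; rw [hgen] at h
    exact Subgroup.mem_zpowers_iff.mp h
  have hc : ∀ x y, Commute (S.σ x) (S.σ y) := by
    intro x y
    obtain ⟨k, hk⟩ := hzp x; obtain ⟨l, hl⟩ := hzp y
    rw [← hk, ← hl]; exact Commute.zpow_zpow (Commute.refl α) k l
  have h2 : ∀ x y z : X, S.σ (S.σ x z) = S.σ (S.σ y z) := fun x y z =>
    (S.rel_one_iff _ _).mp (hlvl.1 x y z)
  have hdiff : ∀ x y z : X, S.σ ((S.σ x * (S.σ y)⁻¹) z) = S.σ z := by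
    intro x y z
    have h := h2 x y ((S.σ y)⁻¹ z)
    simpa [Equiv.Perm.mul_apply, Equiv.Perm.inv_def, Equiv.apply_symm_apply] using h
  have hα : α ∈ S.permGroup := by rw [hgen]; exact Subgroup.mem_zpowers α
  set F : ℤ → Equiv.Perm X := fun k => S.σ ((α ^ k) x₁) with hF
  have hQ := S.ratio_const hc h2
  have hshift0 : ∀ k l : ℤ, F k = F l → ∀ z : X, S.σ ((α ^ (k - l)) z) = S.σ z := by
    intro k l hFkl z
    have hgmem : α ^ (k - l) ∈ S.permGroup := Subgroup.zpow_mem _ hα _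
    have hq := hQ _ hgmem z ((α ^ l) x₁)
    have e1 : (α ^ (k - l)) ((α ^ l) x₁) = (α ^ k) x₁ := by
      rw [← Equiv.Perm.mul_apply, ← zpow_add, show k - l + l = k from by ring]
    rw [e1] at hq
    have : S.σ ((α ^ (k - l)) z) * (S.σ z)⁻¹ = 1 := by
      rw [hq, show S.σ ((α ^ k) x₁) = F k from rfl,
        show S.σ ((α ^ l) x₁) = F l from rfl, hFkl, mul_inv_cancel]
    exact mul_inv_eq_one.mp this
  set P : AddSubgroup ℤ :=
    { carrier := {d : ℤ | ∀ z : X, S.σ ((α ^ d) z) = S.σ z}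
      zero_mem' := by intro z; simp
      add_mem' := by
        intro d e hd he z
        rw [zpow_add, Equiv.Perm.mul_apply, hd, he]
      neg_mem' := by
        intro d hd z
        have h := hd ((α ^ (-d : ℤ)) z)
        rw [← Equiv.Perm.mul_apply, ← zpow_add, show d + -d = 0 from by ring] at h
        simpa using h.symm } with hPdef
  have hP_shift : ∀ d ∈ P, ∀ j : ℤ, F (j + d) = F j := by
    intro d hd j
    show S.σ ((α ^ (j + d)) x₁) = S.σ ((α ^ j) x₁)
    rw [add_comm, zpow_add, Equiv.Perm.mul_apply, hd]
  obtain ⟨g₀, hPcyc⟩ := Int.subgroup_cyclic P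
  set M : ℕ := g₀.natAbs with hM
  have hmem : ∀ d : ℤ, d ∈ P ↔ (M : ℤ) ∣ d := by
    intro d
    rw [hPcyc, AddSubgroup.mem_closure_singleton, hM, Int.natAbs_dvd]
    constructor
    · rintro ⟨n, rfl⟩; exact ⟨n, by rw [zsmul_eq_mul, Int.cast_id, mul_comm]⟩
    · rintro ⟨c, rfl⟩; exact ⟨c, by rw [zsmul_eq_mul, Int.cast_id, mul_comm]⟩
  have hMpos : 0 < M := by
    obtain ⟨k, l, hkl, hFeq⟩ := Finite.exists_ne_map_eq_of_infinite F
    have hmemP : (k - l) ∈ P := fun z => hshift0 k l hFeq z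
    have hdvd := (hmem _).1 hmemP
    rcases Nat.eq_zero_or_pos M with h0 | h
    · rw [h0] at hdvd
      exact absurd (by omega : k = l) hkl
    · exact h
  haveI : NeZero M := ⟨hMpos.ne'⟩
  have hequiv : Equivalence (S.rel 1) := by
    constructor
    · intro x; exact (S.rel_one_iff x x).2 rfl
    · intro x y h; exact (S.rel_one_iff _ _).2 ((S.rel_one_iff _ _).1 h).symm
    · intro x y z h1 h2
      exact (S.rel_one_iff _ _).2
        (((S.rel_one_iff _ _).1 h1).trans ((S.rel_one_iff _ _).1 h2))
  have hcard2 : Nat.card (Quot (S.rel 1)) = M := by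
    let G2 : ZMod M → Quot (S.rel 1) := fun i => Quot.mk _ ((α ^ (i.val : ℤ)) x₁)
    have hinj : Function.Injective G2 := by
      intro i j h
      have hr : S.rel 1 ((α ^ (i.val : ℤ)) x₁) ((α ^ (j.val : ℤ)) x₁) :=
        (hequiv.eqvGen_iff).1 (Quot.eq.1 h)
      have hFe : F (i.val : ℤ) = F (j.val : ℤ) := (S.rel_one_iff _ _).1 hr
      have hdvd : (M : ℤ) ∣ (i.val : ℤ) - (j.val : ℤ) :=
        (hmem _).1 (fun z => hshift0 _ _ hFe z)
      have hmodeq : i.val ≡ j.val [MOD M] := by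
        rw [Nat.modEq_iff_dvd]
        have h3 := dvd_neg.2 hdvd
        rwa [neg_sub] at h3
      have hcast : (i.val : ZMod M) = (j.val : ZMod M) :=
        (ZMod.natCast_eq_natCast_iff _ _ _).2 hmodeq
      rwa [ZMod.natCast_rightInverse i, ZMod.natCast_rightInverse j] at hcast
    have hsurj : Function.Surjective G2 := by
      intro q
      induction q using Quot.ind with
      | _ x => ?_
      obtain ⟨g, hgmem, hgx⟩ := htr x₁ x
      rw [hgen] at hgmem
      obtain ⟨k, rfl⟩ := Subgroup.mem_zpowers_iff.mp hgmem
      refine ⟨((k : ZMod M)), ?_⟩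
      have hdvd : (M : ℤ) ∣ ((((k : ZMod M)).val : ℤ) - k) := by
        have h1 : (((((k : ZMod M)).val : ℤ)) : ZMod M) = ((k : ℤ) : ZMod M) := by
          push_cast
          rw [ZMod.natCast_rightInverse]
        exact Int.ModEq.dvd ((ZMod.intCast_eq_intCast_iff _ _ _).1 h1).symm
      have hFe : F (((k : ZMod M)).val : ℤ) = F k := by
        have hd : ((((k : ZMod M)).val : ℤ) - k) ∈ P := (hmem _).2 hdvd
        have h4 := hP_shift _ hd k
        rwa [show k + ((((k : ZMod M)).val : ℤ) - k) = (((k : ZMod M)).val : ℤ) from by ring]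
          at h4
      apply Quot.sound
      apply (S.rel_one_iff _ _).2
      rw [← hgx]
      exact hFe
    have h5 : Nat.card (ZMod M) = Nat.card (Quot (S.rel 1)) :=
      Nat.card_congr (Equiv.ofBijective G2 ⟨hinj, hsurj⟩)
    rw [← h5, Nat.card_eq_fintype_card, ZMod.card]
  have hcard : S.retCard 1 = M := by
    rw [CycleSet.retCard, hcard2]
  -- final step
  have hper : ((a : ℤ) - (b : ℤ)) ∈ P := by
    intro z
    have hd := hdiff x₁ y₁ z
    rw [hx1, hy1, show (α : Equiv.Perm X) ^ a * (α ^ b)⁻¹ = α ^ ((a : ℤ) - (b : ℤ)) from by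
      rw [zpow_sub, zpow_natCast, zpow_natCast]] at hd
    exact hd
  have hdvd := (hmem _).1 hper
  rw [hcard]
  rw [Nat.modEq_iff_dvd]
  have := dvd_neg.2 hdvd
  rwa [neg_sub] at this
end
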